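/- Let g be a unitary automorphism of (V,h). If the only g-stable isotropic subspace of V is the zero subspace, then g is a semisimple endomorphism of V (equivalently, every g-stable K-subspace of V admits a g-stable K-subspace complement). -/

import Mathlib

/-- If a unitary automorphism `g` of a nondegenerate hermitian space `(V, h)` over a finite
field `K` with `q ^ 2` elements stabilizes no nonzero isotropic subspace, then `g` is
semisimple: every `g`-stable subspace admits a `g`-stable complement. -/
theorem unitary_no_isotropic_semisimple
    (q : ℕ) (hq : IsPrimePow q)
    (K : Type*) [Field K] [Fintype K] (hK : Fintype.card K = q ^ 2)
    (V : Type*) [AddCommGroup V] [Module K V] [FiniteDimensional K V] [Nontrivial V]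
    (h : V → V → K)
    (h_add_left : ∀ x x' y : V, h (x + x') y = h x y + h x' y)
    (h_add_right : ∀ x y y' : V, h x (y + y') = h x y + h x y')
    (h_smul_left : ∀ (c : K) (x y : V), h (c • x) y = c ^ q * h x y)
    (h_smul_right : ∀ (c : K) (x y : V), h x (c • y) = c * h x y)
    (h_symm : ∀ x y : V, h y x = (h x y) ^ q)
    (h_nondeg : ∀ x : V, (∀ y : V, h x y = 0) → x = 0)
    (g : V ≃ₗ[K] V)
    (hg : ∀ x y : V, h (g x) (g y) = h x y)
    (hiso : ∀ W : Submodule K V, (∀ w ∈ W, g w ∈ W) →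
      (∀ w ∈ W, ∀ w' ∈ W, h w w' = 0) → W = ⊥) :
    ∀ W : Submodule K V, (∀ w ∈ W, g w ∈ W) →
      ∃ W' : Submodule K V, (∀ w ∈ W', g w ∈ W') ∧ IsCompl W W' := by
  classical
  have h0l : ∀ x : V, h 0 x = 0 := by
    intro x
    have := h_add_left 0 0 x
    simp only [add_zero] at this
    exact (left_eq_add.mp this)
  have h0r : ∀ x : V, h x 0 = 0 := by
    intro x
    have := h_add_right x 0 0
    simp only [add_zero] at this
    exact (left_eq_add.mp this)
  -- the linear functional h w ·
  let f : V → V →ₗ[K] K := fun w =>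
    { toFun := fun x => h w x
      map_add' := h_add_right w
      map_smul' := fun c x => by simpa using h_smul_right c w x }
  -- left kernel of x
  let rker : V → Submodule K V := fun x =>
    { carrier := {w | h w x = 0}
      add_mem' := fun {a b} ha hb => by
        simp only [Set.mem_setOf_eq] at *
        rw [h_add_left, ha, hb, add_zero]
      zero_mem' := h0l x
      smul_mem' := fun c w hw => by
        simp only [Set.mem_setOf_eq] at *
        rw [h_smul_left, hw, mul_zero] }
  -- orthogonal complement
  let orth : Submodule K V → Submodule K V := fun S =>
    { carrier := {x | ∀ w ∈ S, h w x = 0}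
      add_mem' := fun {a b} ha hb => by
        intro w hw
        rw [h_add_right, ha w hw, hb w hw, add_zero]
      zero_mem' := fun w _ => h0r w
      smul_mem' := fun c x hx w hw => by
        simp only [Set.mem_setOf_eq] at *
        rw [h_smul_right, hx w hw, mul_zero] }
  have mem_orth : ∀ (S : Submodule K V) (x : V), x ∈ orth S ↔ ∀ w ∈ S, h w x = 0 :=
    fun S x => Iff.rfl
  -- dimension bound
  have dimA : ∀ S : Submodule K V,
      Module.finrank K V ≤ Module.finrank K S + Module.finrank K (orth S) := by
    intro S
    set n := Module.finrank K S with hn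
    let b : Module.Basis (Fin n) K S := Module.finBasis K S
    let F : V →ₗ[K] (Fin n → K) := LinearMap.pi (fun i => f (b i : V))
    have hSspan : S = Submodule.span K (Set.range (fun i => ((b i : V)))) := by
      have h1 := congrArg (Submodule.map S.subtype) b.span_eq
      rw [Submodule.map_span, Submodule.map_top, Submodule.range_subtype,
        ← Set.range_comp] at h1
      exact h1.symm
    have hker : LinearMap.ker F = orth S := by
      ext x
      rw [mem_orth]
      constructor
      · intro hx w hw
        have hx' : ∀ i, h (b i : V) x = 0 := by
          intro i
          have := congrFun (LinearMap.mem_ker.mp hx) i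
          simpa [F, f] using this
        have hle : S ≤ rker x := by
          rw [hSspan]
          refine Submodule.span_le.mpr ?_
          rintro _ ⟨i, rfl⟩
          exact hx' i
        exact hle hw
      · intro hx
        ext i
        simpa [F, f] using hx (b i : V) (b i).2
    have hrn := LinearMap.finrank_range_add_finrank_ker F
    have hrange : Module.finrank K (LinearMap.range F) ≤ n := by
      have := Submodule.finrank_le (LinearMap.range F)
      simpa [Module.finrank_pi] using this
    rw [hker] at hrn
    omega
  -- stability of orth
  have horth_stable : ∀ S : Submodule K V, (∀ w ∈ S, g w ∈ S) →
      ∀ x ∈ orth S, g x ∈ orth S := by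
    intro S hS x hx w hw
    have hmap : S.map (g : V →ₗ[K] V) = S := by
      apply Submodule.eq_of_le_of_finrank_le
      · rintro _ ⟨a, ha, rfl⟩
        exact hS a ha
      · exact (LinearEquiv.finrank_map_eq g S).ge
    rw [← hmap] at hw
    rcases hw with ⟨w', hw', rfl⟩
    show h (g w') (g x) = 0
    rw [hg]
    exact hx w' hw'
  intro W hW
  refine ⟨orth W, horth_stable W hW, ?_, ?_⟩
  · -- disjoint
    rw [disjoint_iff]
    apply hiso
    · intro w hw
      exact ⟨hW w hw.1, horth_stable W hW w hw.2⟩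
    · intro w hw w' hw'
      exact hw'.2 w hw.1
  · -- codisjoint
    rw [codisjoint_iff]
    have hinf : W ⊓ orth W = ⊥ := by
      apply hiso
      · intro w hw
        exact ⟨hW w hw.1, horth_stable W hW w hw.2⟩
      · intro w hw w' hw'
        exact hw'.2 w hw.1
    have hsum := Submodule.finrank_sup_add_finrank_inf_eq W (orth W)
    rw [hinf] at hsum
    simp only [finrank_bot, add_zero] at hsum
    have h1 : Module.finrank K V ≤ Module.finrank K ↥(W ⊔ orth W) := by
      rw [hsum]; exact dimA W
    have h2 := Submodule.finrank_le (W ⊔ orth W)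
    exact Submodule.eq_top_of_finrank_eq (le_antisymm h2 h1)
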